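/- Let q be a real number with q > 1 and let m, N be integers with 0 ≤ m ≤ N. Then Σ_{i=0}^{m} (−1)^{m−i} · q^{(m−i)(m−i−1)/2} · [m choose i]_q · (∏_{j=i}^{m−1} (q^j + 1)) · q^{2iN} = Σ_{ℓ=0}^{m} (−1)^{ℓ} · q^{ℓ(ℓ−1) + (m−ℓ)(m−ℓ−1)} · [m choose ℓ]_{q²} · ((q^{m−ℓ} + q^{ℓ})/(q^m + 1)) · ∏_{j=0}^{m−ℓ−1} (q^{2(N−j)} − 1). -/

import Mathlib

open Finset

/-- recursive q-binomial -/
noncomputable def qb (x : ℝ) : ℕ → ℕ → ℝ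
  | 0, 0 => 1
  | 0, _+1 => 0
  | n+1, 0 => 1
  | n+1, k+1 => qb x n k + x^(k+1) * qb x n (k+1)

@[simp] lemma qb_zero_right (x : ℝ) (n : ℕ) : qb x n 0 = 1 := by
  cases n <;> rfl

lemma qb_succ_succ (x : ℝ) (n k : ℕ) :
    qb x (n+1) (k+1) = qb x n k + x^(k+1) * qb x n (k+1) := rfl

lemma qb_eq_zero (x : ℝ) : ∀ {n k : ℕ}, n < k → qb x n k = 0 := by
  intro n
  induction n with
  | zero => intro k hk; match k, hk with | k+1, _ => rfl
  | succ n ih =>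
    intro k hk
    match k, hk with
    | k+1, hk =>
      rw [qb_succ_succ, ih (by omega), ih (by omega)]
      ring

/-- D-product -/
noncomputable def Dd (x : ℝ) (a : ℕ) : ℝ := ∏ j ∈ Finset.Ioc 0 a, (x^j - 1)

@[simp] lemma Dd_zero (x : ℝ) : Dd x 0 = 1 := by simp [Dd]

lemma Dd_succ (x : ℝ) (a : ℕ) : Dd x (a+1) = Dd x a * (x^(a+1) - 1) := by
  rw [Dd, Dd, Finset.prod_Ioc_succ_top (Nat.zero_le _)]

lemma Dd_pos {x : ℝ} (hx : 1 < x) (a : ℕ) : 0 < Dd x a := by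
  apply Finset.prod_pos
  intro j hj
  simp only [Finset.mem_Ioc] at hj
  have : (1:ℝ) < x ^ j := one_lt_pow₀ hx (by omega)
  linarith

lemma Dd_ne_zero {x : ℝ} (hx : 1 < x) (a : ℕ) : Dd x a ≠ 0 := (Dd_pos hx a).ne'

lemma qb_mul_Dd (x : ℝ) : ∀ n k : ℕ, k ≤ n →
    qb x n k * Dd x k = ∏ j ∈ Finset.Ioc (n-k) n, (x^j - 1) := by
  intro n
  induction n with
  | zero => intro k hk; interval_cases k; simp
  | succ n ih =>
    intro k hk
    match k with
    | 0 => simp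
    | k+1 =>
      rw [qb_succ_succ, Dd_succ, add_mul, mul_assoc]
      have hnk : n + 1 - (k + 1) = n - k := by omega
      rw [hnk]
      rcases eq_or_lt_of_le (Nat.lt_succ_iff.mp hk) with h | h
      · subst h
        rw [qb_eq_zero x (Nat.lt_succ_self k), ← mul_assoc, ih k le_rfl]
        simp only [Nat.sub_self]
        rw [← Finset.prod_Ioc_succ_top (Nat.zero_le _)]
        ring
      · have h1 : qb x n k * Dd x k = ∏ j ∈ Finset.Ioc (n-k) n, (x^j - 1) := ih k (by omega)
        have h2 : qb x n (k+1) * Dd x (k+1) = ∏ j ∈ Finset.Ioc (n-(k+1)) n, (x^j - 1) :=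
          ih (k+1) (by omega)
        rw [Dd_succ] at h2
        have h3 : (∏ j ∈ Finset.Ioc (n-(k+1)) (n-k), (x^j - 1)) *
            ∏ j ∈ Finset.Ioc (n-k) n, (x^j - 1) = ∏ j ∈ Finset.Ioc (n-(k+1)) n, (x^j - 1) :=
          Finset.prod_Ioc_consecutive _ (by omega) (by omega)
        have h4 : Finset.Ioc (n-(k+1)) (n-k) = {n-k} := by
          ext j; simp [Finset.mem_Ioc]; omega
        rw [h4, Finset.prod_singleton] at h3
        rw [← mul_assoc (qb x n k), h1, h2, ← h3,
          Finset.prod_Ioc_succ_top (show n - k ≤ n by omega)]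
        have h5 : x^(k+1) * x^(n-k) = x^(n+1) := by
          rw [← pow_add]; congr 1; omega
        rw [← h5]; ring
lemma qb_diag (x : ℝ) : ∀ n, qb x n n = 1
  | 0 => rfl
  | n+1 => by
      rw [qb_succ_succ, qb_eq_zero x (Nat.lt_succ_self n), qb_diag x n]; ring

lemma Dd_split (x : ℝ) {k n : ℕ} (h : k ≤ n) :
    Dd x (n-k) * ∏ j ∈ Finset.Ioc (n-k) n, (x^j - 1) = Dd x n := by
  rw [Dd, Dd]
  exact Finset.prod_Ioc_consecutive _ (Nat.zero_le _) (by omega)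

lemma qb_Dd_Dd (x : ℝ) {k n : ℕ} (h : k ≤ n) :
    qb x n k * Dd x k * Dd x (n-k) = Dd x n := by
  calc qb x n k * Dd x k * Dd x (n-k)
      = Dd x (n-k) * (qb x n k * Dd x k) := by ring
    _ = Dd x (n-k) * ∏ j ∈ Finset.Ioc (n-k) n, (x^j - 1) := by rw [qb_mul_Dd x n k h]
    _ = Dd x n := Dd_split x h

lemma qb_div {x : ℝ} (hx : 1 < x) {k n : ℕ} (h : k ≤ n) :
    qb x n k = Dd x n / (Dd x k * Dd x (n-k)) := by
  rw [eq_div_iff (mul_ne_zero (Dd_ne_zero hx k) (Dd_ne_zero hx (n-k))), ← qb_Dd_Dd x h]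
  ring

lemma qb_pos {x : ℝ} (hx : 1 < x) {k n : ℕ} (h : k ≤ n) : 0 < qb x n k := by
  rw [qb_div hx h]
  exact div_pos (Dd_pos hx n) (mul_pos (Dd_pos hx k) (Dd_pos hx (n-k)))

lemma qb_sym {x : ℝ} (hx : 1 < x) {k n : ℕ} (h : k ≤ n) :
    qb x n k = qb x n (n-k) := by
  rw [qb_div hx h, qb_div hx (Nat.sub_le n k)]
  rw [Nat.sub_sub_self h, mul_comm]

lemma qb_pascal2 {x : ℝ} (hx : 1 < x) (n ℓ : ℕ) :
    qb x (n+1) (ℓ+1) = qb x n (ℓ+1) + x^(n-ℓ) * qb x n ℓ := by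
  rcases lt_trichotomy ℓ n with h | h | h
  · have h1 : qb x (n+1) (ℓ+1) = qb x (n+1) (n-ℓ) := by
      rw [qb_sym hx (show ℓ+1 ≤ n+1 by omega)]
      congr 1; omega
    have h2 : n - ℓ = (n - ℓ - 1) + 1 := by omega
    rw [h1, h2, qb_succ_succ]
    rw [show qb x n (n-ℓ-1) = qb x n (ℓ+1) from by
      rw [qb_sym hx (show n-ℓ-1 ≤ n by omega)]; congr 1; omega]
    rw [show qb x n (n-ℓ-1+1) = qb x n ℓ from by
      rw [qb_sym hx (show n-ℓ-1+1 ≤ n by omega)]; congr 1; omega]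
  · subst h
    rw [qb_diag x (ℓ+1), qb_diag x ℓ,
      show qb x ℓ (ℓ+1) = 0 from qb_eq_zero x (by omega), Nat.sub_self]
    ring
  · rw [show qb x (n+1) (ℓ+1) = 0 from qb_eq_zero x (by omega),
      show qb x n (ℓ+1) = 0 from qb_eq_zero x (by omega),
      show qb x n ℓ = 0 from qb_eq_zero x (by omega)]
    ring

lemma qb_trinom {x : ℝ} (hx : 1 < x) {i ℓ m : ℕ} (h : ℓ + i ≤ m) :
    qb x m ℓ * qb x (m-ℓ) i = qb x m i * qb x (m-i) ℓ := by
  rw [qb_div hx (show ℓ ≤ m by omega), qb_div hx (show i ≤ m - ℓ by omega),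
    qb_div hx (show i ≤ m by omega), qb_div hx (show ℓ ≤ m - i by omega)]
  rw [show m - ℓ - i = m - i - ℓ from by omega]
  have n1 := Dd_ne_zero hx ℓ; have n2 := Dd_ne_zero hx i
  have n3 := Dd_ne_zero hx (m-ℓ); have n4 := Dd_ne_zero hx (m-i)
  have n5 := Dd_ne_zero hx (m-i-ℓ); have n6 := Dd_ne_zero hx m
  have e1 : Dd x (m-ℓ) * Dd x (m-i) ≠ 0 := mul_ne_zero n3 n4
  field_simp
/-- The Gaussian binomial coefficient `[n choose k]_q` for a real base `q`. -/
noncomputable def gbinom (q : ℝ) (n k : ℕ) : ℝ :=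
  ∏ j ∈ Finset.Icc 1 k, (q ^ (n - k + j) - 1) / (q ^ j - 1)

lemma Icc_one_eq_Ioc (k : ℕ) : Finset.Icc 1 k = Finset.Ioc 0 k := by
  ext j; simp [Finset.mem_Icc, Finset.mem_Ioc]; omega

lemma gbinom_eq_qb {q : ℝ} (hq : 1 < q) {k n : ℕ} (h : k ≤ n) :
    gbinom q n k = qb q n k := by
  rw [gbinom, Finset.prod_div_distrib, Icc_one_eq_Ioc]
  have hnum : (∏ j ∈ Finset.Ioc 0 k, (q ^ (n - k + j) - 1))
      = ∏ j ∈ Finset.Ioc (n-k) n, (q^j - 1) := by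
    rw [show Finset.Ioc 0 k = Finset.Ico 1 (k+1) from by ext j; simp [Finset.mem_Ioc, Finset.mem_Ico]; omega]
    rw [show Finset.Ioc (n-k) n = Finset.Ico (n-k+1) (n+1) from by ext j; simp [Finset.mem_Ioc, Finset.mem_Ico]]
    rw [Finset.prod_Ico_eq_prod_range, Finset.prod_Ico_eq_prod_range]
    apply Finset.prod_congr (by congr 1 <;> omega)
    intro j _
    congr 2
    omega
  rw [hnum, ← qb_mul_Dd q n k h]
  have hD : (∏ j ∈ Finset.Ioc 0 k, (q ^ j - 1)) = Dd q k := rfl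
  rw [hD, mul_div_assoc, div_self (Dd_ne_zero hq k), mul_one]

/-- product of (q^j + 1) -/
noncomputable def Pp (q : ℝ) (a : ℕ) : ℝ := ∏ j ∈ Finset.Ioc 0 a, (q^j + 1)

@[simp] lemma Pp_zero (q : ℝ) : Pp q 0 = 1 := by simp [Pp]

lemma Pp_succ (q : ℝ) (a : ℕ) : Pp q (a+1) = Pp q a * (q^(a+1) + 1) := by
  rw [Pp, Pp, Finset.prod_Ioc_succ_top (Nat.zero_le _)]

lemma Pp_pos {q : ℝ} (hq : 1 < q) (a : ℕ) : 0 < Pp q a := by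
  apply Finset.prod_pos
  intro j _
  positivity

lemma Pp_ne_zero {q : ℝ} (hq : 1 < q) (a : ℕ) : Pp q a ≠ 0 := (Pp_pos hq a).ne'

lemma Dd_sq (q : ℝ) (a : ℕ) : Dd (q^2) a = Dd q a * Pp q a := by
  rw [Dd, Dd, Pp, ← Finset.prod_mul_distrib]
  apply Finset.prod_congr rfl
  intro j _
  rw [← pow_mul, mul_comm 2 j, pow_mul]
  ring

lemma Pp_split {q : ℝ} {i m : ℕ} (h : i ≤ m) :
    Pp q i * ∏ j ∈ Finset.Ioc i m, (q^j + 1) = Pp q m := by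
  rw [Pp, Pp]
  exact Finset.prod_Ioc_consecutive _ (Nat.zero_le _) h

lemma step1 {q : ℝ} (hq : 1 < q) {i m : ℕ} (h : i ≤ m) :
    gbinom q m i * (∏ j ∈ Finset.Ico i m, (q^j+1)) * (q^m+1)
      = qb (q^2) m i * ((q^i+1) * Pp q (m-i)) := by
  have hq2 : 1 < q^2 := by nlinarith
  rw [gbinom_eq_qb hq h]
  set A := ∏ j ∈ Finset.Ioc i m, (q^j + 1) with hA
  have f1 : (∏ j ∈ Finset.Ico i m, (q^j+1)) * (q^m+1) = (q^i+1) * A := by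
    rw [← Finset.prod_Ico_succ_top (show i ≤ m by omega)]
    rw [Finset.prod_eq_prod_Ico_succ_bot (show i < m + 1 by omega)]
    congr 1
    rw [hA]
    apply Finset.prod_congr (by ext j; simp [Finset.mem_Ioc, Finset.mem_Ico]) (fun _ _ => rfl)
  have f2 : Pp q i * A = Pp q m := Pp_split h
  have f3 : qb q m i * Dd q i * Dd q (m-i) = Dd q m := qb_Dd_Dd q h
  have f4 : qb (q^2) m i * (Dd q i * Pp q i) * (Dd q (m-i) * Pp q (m-i)) = Dd q m * Pp q m := by
    rw [← Dd_sq, ← Dd_sq, ← Dd_sq]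
    exact qb_Dd_Dd (q^2) h
  have hM : Dd q i * Dd q (m-i) * Pp q i * Pp q (m-i) ≠ 0 := by
    have := Dd_ne_zero hq i; have := Dd_ne_zero hq (m-i)
    have := Pp_ne_zero hq i; have := Pp_ne_zero hq (m-i)
    positivity
  apply mul_right_cancel₀ hM
  linear_combination (qb q m i * Dd q i * Dd q (m-i) * Pp q i * Pp q (m-i)) * f1 +
    ((q^i+1) * A * Pp q i * Pp q (m-i)) * f3 +
    ((q^i+1) * Pp q (m-i) * Dd q m) * f2 -
    ((q^i+1) * Pp q (m-i)) * f4
/-- core sum -/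
noncomputable def Sc (q : ℝ) (k : ℕ) : ℝ :=
  ∑ ℓ ∈ Finset.range (k+1), qb (q^2) k ℓ * q^(ℓ*(ℓ-1) + (k-ℓ)*(k-ℓ-1) + ℓ)

lemma tri_succ (k : ℕ) : (k+1)*k/2 = k*(k-1)/2 + k := by
  have h : (k+1)*k = k*(k-1) + k*2 := by
    cases k with
    | zero => rfl
    | succ k => simp only [Nat.succ_sub_one]; ring
  rw [h, Nat.add_mul_div_right _ _ (by norm_num : 0 < 2)]

lemma core {q : ℝ} (hq : 1 < q) (k : ℕ) : Sc q k = q^(k*(k-1)/2) * Pp q k := by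
  have hq2 : 1 < q^2 := by nlinarith
  induction k with
  | zero => simp [Sc, Pp, qb]
  | succ k ih =>
    have hrefl : (∑ ℓ ∈ Finset.range (k+1),
        qb (q^2) k ℓ * q^(ℓ*(ℓ-1) + (k-ℓ)*(k-ℓ-1) + ℓ + 2*(k-ℓ)))
        = q^k * Sc q k := by
      rw [Sc, Finset.mul_sum,
        ← Finset.sum_range_reflect (fun ℓ => qb (q^2) k ℓ * q^(ℓ*(ℓ-1) + (k-ℓ)*(k-ℓ-1) + ℓ + 2*(k-ℓ))) (k+1)]
      apply Finset.sum_congr rfl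
      intro j hj
      simp only [Finset.mem_range] at hj
      have hjk : j ≤ k := by omega
      have h1 : k + 1 - 1 - j = k - j := by omega
      rw [h1]
      have h2 : qb (q^2) k (k-j) = qb (q^2) k j := by
        rw [← qb_sym hq2 hjk]
      rw [h2, mul_comm (q^k), mul_assoc, ← pow_add]
      congr 1
      obtain ⟨c, rfl⟩ : ∃ c, k = j + c := ⟨k - j, by omega⟩
      have h3 : j + c - j = c := by omega
      rw [h3]
      have h4 : j + c - c = j := by omega
      rw [h4]
      congr 1
      generalize j*(j-1) = A
      generalize c*(c-1) = B
      omega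
    have hterm : ∀ i ∈ Finset.range (k+1),
        qb (q^2) (k+1) (i+1) * q^((i+1)*(i+1-1) + (k+1-(i+1))*(k+1-(i+1)-1) + (i+1))
        = qb (q^2) k (i+1) * q^((i+1)*(i+1-1) + (k+1-(i+1))*(k+1-(i+1)-1) + (i+1))
          + qb (q^2) k i * q^(i*(i-1) + (k-i)*(k-i-1) + i + (2*k+1)) := by
      intro i hi
      simp only [Finset.mem_range] at hi
      rw [qb_pascal2 hq2 k i, add_mul]
      congr 1
      rw [← pow_mul, mul_comm ((q:ℝ) ^ (2*(k-i))), mul_assoc, ← pow_add]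
      congr 2
      obtain ⟨c, rfl⟩ : ∃ c, k = i + c := ⟨k - i, by omega⟩
      have h3 : i + c - i = c := by omega
      have h4 : i + c + 1 - (i+1) = c := by omega
      have h5 : i + 1 - 1 = i := by omega
      rw [h3, h4, h5]
      cases c with
      | zero => cases i with
        | zero => norm_num
        | succ i => simp only [Nat.succ_sub_one]; ring
      | succ c => cases i with
        | zero => simp only [Nat.succ_sub_one]; ring
        | succ i => simp only [Nat.succ_sub_one]; ring
    -- assemble
    rw [Sc, Finset.sum_range_succ' _ (k+1), Finset.sum_congr rfl hterm]
    rw [Finset.sum_add_distrib]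
    -- second piece: ∑ qb k i * q^(f + (2k+1)) = q^(2k+1) * Sc q k
    have hs2 : (∑ i ∈ Finset.range (k+1), qb (q^2) k i * q^(i*(i-1) + (k-i)*(k-i-1) + i + (2*k+1)))
        = q^(2*k+1) * Sc q k := by
      rw [Sc, Finset.mul_sum]
      apply Finset.sum_congr rfl
      intro i _
      rw [pow_add]
      ring
    -- first piece: ∑_{i∈range(k+1)} qb k (i+1) * q^(f(k+1,i+1)) = T' - q^(f(k,0)+2k)
    have hs1 : (∑ i ∈ Finset.range (k+1),
        qb (q^2) k (i+1) * q^((i+1)*(i+1-1) + (k+1-(i+1))*(k+1-(i+1)-1) + (i+1)))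
        = (∑ ℓ ∈ Finset.range (k+1),
            qb (q^2) k ℓ * q^(ℓ*(ℓ-1) + (k-ℓ)*(k-ℓ-1) + ℓ + 2*(k-ℓ))) - q^(k*(k-1) + 2*k) := by
      have expand : ∀ ℓ ∈ Finset.range (k+2),
          qb (q^2) k ℓ * q^(ℓ*(ℓ-1) + (k+1-ℓ)*(k+1-ℓ-1) + ℓ)
          = (if ℓ = k+1 then 0 else qb (q^2) k ℓ * q^(ℓ*(ℓ-1) + (k-ℓ)*(k-ℓ-1) + ℓ + 2*(k-ℓ))) := by
        intro ℓ hℓ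
        simp only [Finset.mem_range] at hℓ
        by_cases hc : ℓ = k+1
        · simp [hc, qb_eq_zero (q^2) (show k < k+1 by omega)]
        · simp only [if_neg hc]
          congr 2
          have hlk : ℓ ≤ k := by omega
          obtain ⟨c, rfl⟩ : ∃ c, k = ℓ + c := ⟨k - ℓ, by omega⟩
          have h3 : ℓ + c - ℓ = c := by omega
          have h4 : ℓ + c + 1 - ℓ = c + 1 := by omega
          rw [h3, h4]
          simp only [Nat.add_sub_cancel]
          cases c with
          | zero => norm_num
          | succ c => simp only [Nat.succ_sub_one]; ring
      have e1 : (∑ i ∈ Finset.range (k+1),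
          qb (q^2) k (i+1) * q^((i+1)*(i+1-1) + (k+1-(i+1))*(k+1-(i+1)-1) + (i+1)))
          = (∑ ℓ ∈ Finset.range (k+2), qb (q^2) k ℓ * q^(ℓ*(ℓ-1) + (k+1-ℓ)*(k+1-ℓ-1) + ℓ))
            - qb (q^2) k 0 * q^(0*(0-1) + (k+1-0)*(k+1-0-1) + 0) := by
        rw [Finset.sum_range_succ'
          (fun ℓ => qb (q^2) k ℓ * q^(ℓ*(ℓ-1) + (k+1-ℓ)*(k+1-ℓ-1) + ℓ)) (k+1)]
        ring
      have e2 : (∑ ℓ ∈ Finset.range (k+2), qb (q^2) k ℓ * q^(ℓ*(ℓ-1) + (k+1-ℓ)*(k+1-ℓ-1) + ℓ))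
          = ∑ ℓ ∈ Finset.range (k+1),
              qb (q^2) k ℓ * q^(ℓ*(ℓ-1) + (k-ℓ)*(k-ℓ-1) + ℓ + 2*(k-ℓ)) := by
        rw [Finset.sum_congr rfl expand, Finset.sum_range_succ, if_pos rfl, add_zero]
        apply Finset.sum_congr rfl
        intro ℓ hℓ
        simp only [Finset.mem_range] at hℓ
        rw [if_neg (by omega)]
      rw [e1, e2]
      congr 1
      simp only [qb_zero_right, one_mul, Nat.zero_mul, Nat.sub_zero, Nat.add_sub_cancel,
        Nat.zero_add, Nat.add_zero]
      congr 1
      cases k with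
      | zero => rfl
      | succ k => simp only [Nat.succ_sub_one]; ring
    have hzero : qb (q^2) (k+1) 0 * q^(0*(0-1) + (k+1-0)*(k+1-0-1) + 0) = q^(k*(k-1)+2*k) := by
      simp only [qb_zero_right, one_mul, Nat.zero_mul, Nat.sub_zero, Nat.add_sub_cancel,
        Nat.zero_add, Nat.add_zero]
      congr 1
      cases k with
      | zero => rfl
      | succ k => simp only [Nat.succ_sub_one]; ring
    rw [hs1, hrefl, hs2, hzero, ih]
    rw [show (k+1)*(k+1-1)/2 = k*(k-1)/2 + k from by
      simpa using tri_succ k]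
    rw [Pp_succ, pow_add q (k*(k-1)) (2*k), pow_add q (k*(k-1)/2) k,
      show 2*k+1 = k + (k+1) from by omega, pow_add q k (k+1)]
    ring
lemma prodExpand {q : ℝ} (hq : 1 < q) (N : ℕ) : ∀ a : ℕ, a ≤ N →
    ∏ j ∈ Finset.range a, (q^(2*(N-j)) - 1)
    = ∑ i ∈ Finset.range (a+1), (-1:ℝ)^(a-i) * qb (q^2) a i * q^(2*i*(N-a) + i*(i+1)) := by
  intro a
  induction a with
  | zero => intro _; simp [qb]
  | succ a ih =>
    intro h
    have hIH := ih (by omega)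
    rw [Finset.prod_range_succ, hIH]
    have hNa : N - a = (N - (a+1)) + 1 := by omega
    have hsplit : ∀ i ∈ Finset.range (a+1),
        (-1:ℝ)^(a+1-(i+1)) * qb (q^2) (a+1) (i+1) * q^(2*(i+1)*(N-(a+1)) + (i+1)*(i+1+1))
        = (-1:ℝ)^(a-i) * qb (q^2) a i * q^(2*i*(N-a) + i*(i+1)) * q^(2*(N-a))
          + (-((-1:ℝ)^(a-(i+1)) * qb (q^2) a (i+1) * q^(2*(i+1)*(N-a) + (i+1)*(i+1+1)))) := by
      intro i hi
      simp only [Finset.mem_range] at hi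
      rw [qb_succ_succ]
      have e1 : a + 1 - (i+1) = a - i := by omega
      rw [e1]
      have hP1 : (q:ℝ)^(2*(i+1)*(N-(a+1)) + (i+1)*(i+1+1))
          = q^(2*i*(N-a) + i*(i+1)) * q^(2*(N-a)) := by
        rw [← pow_add]
        congr 1
        rw [hNa]; ring
      have hP2 : ((q:ℝ)^2)^(i+1) * q^(2*(i+1)*(N-(a+1)) + (i+1)*(i+1+1))
          = q^(2*(i+1)*(N-a) + (i+1)*(i+1+1)) := by
        rw [← pow_mul, ← pow_add]
        congr 1
        rw [hNa]; ring
      by_cases hia : i = a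
      · subst hia
        rw [qb_eq_zero (q^2) (Nat.lt_succ_self i)]
        linear_combination ((-1:ℝ)^(i-i) * qb (q^2) i i) * hP1
      · have hs : (-1:ℝ)^(a-i) = (-1:ℝ)^(a-(i+1)) * (-1) := by
          rw [show a - i = (a-(i+1))+1 from by omega, pow_succ]
        linear_combination ((-1:ℝ)^(a-i) * qb (q^2) a i) * hP1
          + ((-1:ℝ)^(a-i) * qb (q^2) a (i+1)) * hP2
          + (qb (q^2) a (i+1) * q^(2*(i+1)*(N-a)+(i+1)*(i+1+1))) * hs
    rw [Finset.sum_range_succ'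
      (fun i => (-1:ℝ)^(a+1-i) * qb (q^2) (a+1) i * q^(2*i*(N-(a+1)) + i*(i+1))) (a+1)]
    rw [Finset.sum_congr rfl hsplit, Finset.sum_add_distrib]
    have hB : (∑ i ∈ Finset.range (a+1),
        (-((-1:ℝ)^(a-(i+1)) * qb (q^2) a (i+1) * q^(2*(i+1)*(N-a) + (i+1)*(i+1+1)))))
        = -(∑ i ∈ Finset.range (a+1), (-1:ℝ)^(a-i) * qb (q^2) a i * q^(2*i*(N-a) + i*(i+1))) + (-1:ℝ)^a := by
      rw [Finset.sum_neg_distrib]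
      rw [show (∑ i ∈ Finset.range (a+1),
          ((-1:ℝ)^(a-(i+1)) * qb (q^2) a (i+1) * q^(2*(i+1)*(N-a) + (i+1)*(i+1+1))))
          = (∑ j ∈ Finset.range (a+2), (-1:ℝ)^(a-j) * qb (q^2) a j * q^(2*j*(N-a) + j*(j+1)))
            - (-1:ℝ)^(a-0) * qb (q^2) a 0 * q^(2*0*(N-a) + 0*(0+1)) from by
        rw [Finset.sum_range_succ'
          (fun j => (-1:ℝ)^(a-j) * qb (q^2) a j * q^(2*j*(N-a) + j*(j+1))) (a+1)]
        ring]
      rw [Finset.sum_range_succ, qb_eq_zero (q^2) (Nat.lt_succ_self a)]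
      simp
      ring
    rw [hB]
    simp only [Nat.sub_zero, Nat.mul_zero, Nat.zero_mul, pow_zero, mul_one, qb_zero_right]
    rw [show (-1:ℝ)^(a+1) = -(-1:ℝ)^a from by rw [pow_succ]; ring]
    rw [← Finset.sum_mul]
    ring
lemma mp (n : ℕ) : n*(n-1) = n*n - n := by
  cases n with
  | zero => rfl
  | succ k =>
    simp only [Nat.succ_sub_one]
    rw [show (k+1)*(k+1) = (k+1)*k + (k+1) from by ring, Nat.add_sub_cancel]

lemma nle (n : ℕ) : n ≤ n*n := by
  cases n with
  | zero => simp
  | succ k => exact Nat.le_mul_of_pos_left _ (by omega)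

lemma Sc_reflect {q : ℝ} (hq : 1 < q) (k : ℕ) :
    (∑ ℓ ∈ Finset.range (k+1),
      qb (q^2) k ℓ * q^(ℓ*(ℓ-1)+(k-ℓ)*(k-ℓ-1)+(k-ℓ))) = Sc q k := by
  have hq2 : 1 < q^2 := by nlinarith
  rw [Sc, ← Finset.sum_range_reflect
    (fun ℓ => qb (q^2) k ℓ * q^(ℓ*(ℓ-1)+(k-ℓ)*(k-ℓ-1)+ℓ)) (k+1)]
  apply Finset.sum_congr rfl
  intro j hj
  simp only [Finset.mem_range] at hj
  have hjk : j ≤ k := by omega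
  rw [show k + 1 - 1 - j = k - j from by omega]
  rw [show qb (q^2) k (k-j) = qb (q^2) k j from by rw [← qb_sym hq2 hjk]]
  congr 2
  rw [show k - (k-j) = j from by omega]
  generalize j*(j-1) = A
  generalize (k-j)*(k-j-1) = B
  omega

lemma keylemma {q : ℝ} (hq : 1 < q) {i m N : ℕ} (him : i ≤ m) (hmN : m ≤ N) :
    q^((m-i)*(m-i-1)/2) * (qb (q^2) m i * ((q^i+1) * Pp q (m-i))) * q^(2*i*N)
    = ∑ ℓ ∈ Finset.range ((m-i)+1),
        q^(ℓ*(ℓ-1)+(m-ℓ)*(m-ℓ-1)) * qb (q^2) m ℓ * (q^(m-ℓ)+q^ℓ)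
          * (qb (q^2) (m-ℓ) i * q^(2*i*(N-(m-ℓ)) + i*(i+1))) := by
  have hq2 : 1 < q^2 := by nlinarith
  have hterm : ∀ ℓ ∈ Finset.range ((m-i)+1),
      q^(ℓ*(ℓ-1)+(m-ℓ)*(m-ℓ-1)) * qb (q^2) m ℓ * (q^(m-ℓ)+q^ℓ)
        * (qb (q^2) (m-ℓ) i * q^(2*i*(N-(m-ℓ)) + i*(i+1)))
      = qb (q^2) m i * q^(2*i*N) *
          (q^i * (qb (q^2) (m-i) ℓ * q^(ℓ*(ℓ-1)+(m-i-ℓ)*(m-i-ℓ-1)+(m-i-ℓ)))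
           + qb (q^2) (m-i) ℓ * q^(ℓ*(ℓ-1)+(m-i-ℓ)*(m-i-ℓ-1)+ℓ)) := by
    intro ℓ hℓ
    simp only [Finset.mem_range] at hℓ
    have hlk : ℓ ≤ m - i := by omega
    have htri := qb_trinom hq2 (show ℓ + i ≤ m by omega)
    have hsplit : (q:ℝ)^(m-ℓ) = q^i * q^(m-i-ℓ) := by
      rw [← pow_add]; congr 1; omega
    have hE : (q:ℝ)^(ℓ*(ℓ-1)+(m-ℓ)*(m-ℓ-1)) * q^(2*i*(N-(m-ℓ)) + i*(i+1))
        = q^(ℓ*(ℓ-1)+(m-i-ℓ)*(m-i-ℓ-1)) * q^(2*i*N) := by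
      rw [← pow_add, ← pow_add]
      congr 1
      rw [mp ℓ, mp (m-ℓ), mp (m-i-ℓ)]
      zify [nle ℓ, nle (m-ℓ), nle (m-i-ℓ), show ℓ ≤ m from by omega,
        show m - ℓ ≤ N from by omega, hlk, him, show ℓ ≤ m - i from hlk]
      ring
    have e2 : (q:ℝ)^(ℓ*(ℓ-1)+(m-i-ℓ)*(m-i-ℓ-1)+(m-i-ℓ))
        = q^(ℓ*(ℓ-1)+(m-i-ℓ)*(m-i-ℓ-1)) * q^(m-i-ℓ) := by rw [← pow_add]
    have e3 : (q:ℝ)^(ℓ*(ℓ-1)+(m-i-ℓ)*(m-i-ℓ-1)+ℓ)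
        = q^(ℓ*(ℓ-1)+(m-i-ℓ)*(m-i-ℓ-1)) * q^ℓ := by rw [← pow_add]
    rw [hsplit, e2, e3]
    linear_combination ((q^i * q^(m-i-ℓ) + q^ℓ) * q^(ℓ*(ℓ-1)+(m-ℓ)*(m-ℓ-1))
        * q^(2*i*(N-(m-ℓ)) + i*(i+1))) * htri
      + ((q^i * q^(m-i-ℓ) + q^ℓ) * qb (q^2) m i * qb (q^2) (m-i) ℓ) * hE
  rw [Finset.sum_congr rfl hterm, ← Finset.mul_sum, Finset.sum_add_distrib, ← Finset.mul_sum]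
  have hy : (∑ ℓ ∈ Finset.range ((m-i)+1),
      qb (q^2) (m-i) ℓ * q^(ℓ*(ℓ-1)+(m-i-ℓ)*(m-i-ℓ-1)+ℓ)) = Sc q (m-i) := rfl
  have hx : (∑ ℓ ∈ Finset.range ((m-i)+1),
      qb (q^2) (m-i) ℓ * q^(ℓ*(ℓ-1)+(m-i-ℓ)*(m-i-ℓ-1)+(m-i-ℓ))) = Sc q (m-i) :=
    Sc_reflect hq (m-i)
  rw [hy, hx, core hq (m-i)]
  ring
theorem stmt5 (q : ℝ) (hq : 1 < q) (m N : ℕ) (hmN : m ≤ N) :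
    ∑ i ∈ Finset.range (m + 1),
      (-1 : ℝ) ^ (m - i) * q ^ ((m - i) * (m - i - 1) / 2) * gbinom q m i *
        (∏ j ∈ Finset.Ico i m, (q ^ j + 1)) * q ^ (2 * i * N) =
    ∑ ℓ ∈ Finset.range (m + 1),
      (-1 : ℝ) ^ ℓ * q ^ (ℓ * (ℓ - 1) + (m - ℓ) * (m - ℓ - 1)) * gbinom (q ^ 2) m ℓ *
        ((q ^ (m - ℓ) + q ^ ℓ) / (q ^ m + 1)) *
        ∏ j ∈ Finset.range (m - ℓ), (q ^ (2 * (N - j)) - 1) := by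
  have hq2 : 1 < q^2 := by nlinarith
  have hq0 : (0:ℝ) < q := by linarith
  have hqm : (q:ℝ)^m + 1 ≠ 0 := by positivity
  have hR : ∀ ℓ ∈ Finset.range (m+1),
      (-1 : ℝ) ^ ℓ * q ^ (ℓ * (ℓ - 1) + (m - ℓ) * (m - ℓ - 1)) * gbinom (q ^ 2) m ℓ *
        ((q ^ (m - ℓ) + q ^ ℓ) / (q ^ m + 1)) *
        ∏ j ∈ Finset.range (m - ℓ), (q ^ (2 * (N - j)) - 1)
      = ∑ i ∈ Finset.range (m+1),
          (-1:ℝ)^ℓ * q^(ℓ*(ℓ-1) + (m-ℓ)*(m-ℓ-1)) * qb (q^2) m ℓ * ((q^(m-ℓ)+q^ℓ)/(q^m+1))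
            * ((-1:ℝ)^(m-ℓ-i) * qb (q^2) (m-ℓ) i * q^(2*i*(N-(m-ℓ)) + i*(i+1))) := by
    intro ℓ hℓ
    simp only [Finset.mem_range] at hℓ
    rw [gbinom_eq_qb hq2 (show ℓ ≤ m by omega), prodExpand hq N (m-ℓ) (by omega),
      Finset.mul_sum]
    apply Finset.sum_subset (Finset.range_subset_range.mpr (by omega))
    intro x hx hx'
    simp only [Finset.mem_range] at hx hx'
    rw [qb_eq_zero (q^2) (show m-ℓ < x by omega)]
    ring
  rw [Finset.sum_congr rfl hR, Finset.sum_comm]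
  apply Finset.sum_congr rfl
  intro i hi
  simp only [Finset.mem_range] at hi
  have him : i ≤ m := by omega
  rw [← Finset.sum_subset (Finset.range_subset_range.mpr (show m-i+1 ≤ m+1 by omega))
    (fun ℓ hℓ hℓ' => by
      simp only [Finset.mem_range] at hℓ hℓ'
      rw [qb_eq_zero (q^2) (show m-ℓ < i by omega)]
      ring)]
  have hTe : ∀ ℓ ∈ Finset.range (m-i+1),
      (-1:ℝ)^ℓ * q^(ℓ*(ℓ-1) + (m-ℓ)*(m-ℓ-1)) * qb (q^2) m ℓ * ((q^(m-ℓ)+q^ℓ)/(q^m+1))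
        * ((-1:ℝ)^(m-ℓ-i) * qb (q^2) (m-ℓ) i * q^(2*i*(N-(m-ℓ)) + i*(i+1)))
      = (-1:ℝ)^(m-i) *
          ((q^(ℓ*(ℓ-1)+(m-ℓ)*(m-ℓ-1)) * qb (q^2) m ℓ * (q^(m-ℓ)+q^ℓ)
            * (qb (q^2) (m-ℓ) i * q^(2*i*(N-(m-ℓ)) + i*(i+1)))) / (q^m+1)) := by
    intro ℓ hℓ
    simp only [Finset.mem_range] at hℓ
    have hsgn : (-1:ℝ)^ℓ * (-1:ℝ)^(m-ℓ-i) = (-1:ℝ)^(m-i) := by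
      rw [← pow_add]; congr 1; omega
    linear_combination (q^(ℓ*(ℓ-1)+(m-ℓ)*(m-ℓ-1)) * qb (q^2) m ℓ * (q^(m-ℓ)+q^ℓ)
      * qb (q^2) (m-ℓ) i * q^(2*i*(N-(m-ℓ)) + i*(i+1))) / (q^m+1) * hsgn
  rw [Finset.sum_congr rfl hTe, ← Finset.mul_sum, ← Finset.sum_div, ← keylemma hq him hmN]
  rw [show q^((m-i)*(m-i-1)/2) * (qb (q^2) m i * ((q^i+1) * Pp q (m-i))) * q^(2*i*N)
      = q^((m-i)*(m-i-1)/2) * (gbinom q m i * (∏ j ∈ Finset.Ico i m, (q^j+1)) * (q^m+1)) * q^(2*i*N) from by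
    rw [step1 hq him]]
  field_simp
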